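/- arXiv:2006.14980 — 2 statements merged into one kernel-verified Lean document; each statement's English description precedes it below -/
import Mathlib

section
/- For every t ≥ 0 and every Borel set X ⊆ H with μ₀(X) > 0, one has the lower bound μ_t(X) ≥ (μ₀(X)/N_t) · exp( −(t/μ₀(X)) · ∫_X Φ dμ₀ ); in particular μ_t(X) > 0. -/
open MeasureTheory Real

/-- The tempering measure `μ_t`, defined by `dμ_t/dμ₀ = N_t⁻¹ exp (-t Φ)` where
`N_t = ∫ exp (-t Φ) dμ₀` is the normalizing constant. -/
noncomputable def temper {H : Type*} [MeasurableSpace H]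
    (μ₀ : Measure H) (Φ : H → ℝ) (t : ℝ) : Measure H :=
  μ₀.withDensity fun u =>
    ENNReal.ofReal ((∫ v, Real.exp (-t * Φ v) ∂μ₀)⁻¹ * Real.exp (-t * Φ u))

/-- Let `H` be a real separable Hilbert space with its Borel σ-algebra,
`μ₀` a Borel probability measure on `H`, and `Φ : H → ℝ` measurable, nonnegative and
integrable w.r.t. `μ₀`.  For every `t ≥ 0` and every Borel set `X ⊆ H` with
`μ₀(X) > 0`, one has the lower bound
`μ_t(X) ≥ (μ₀(X) / N_t) · exp (-(t / μ₀(X)) · ∫_X Φ dμ₀)`;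
in particular `μ_t(X) > 0`. -/
theorem tempering_measure_lower_bound_on_sets
    {H : Type*} [NormedAddCommGroup H] [InnerProductSpace ℝ H] [CompleteSpace H]
    [TopologicalSpace.SeparableSpace H] [MeasurableSpace H] [BorelSpace H]
    (μ₀ : Measure H) [IsProbabilityMeasure μ₀]
    (Φ : H → ℝ) (hΦmeas : Measurable Φ) (hΦnonneg : ∀ u, 0 ≤ Φ u)
    (hΦint : Integrable Φ μ₀) (t : ℝ) (ht : 0 ≤ t)
    (X : Set H) (hX : MeasurableSet X) (hX0 : 0 < μ₀ X) :
    (μ₀ X).toReal / (∫ u, Real.exp (-t * Φ u) ∂μ₀) *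
        Real.exp (-(t / (μ₀ X).toReal) * ∫ u in X, Φ u ∂μ₀)
      ≤ (temper μ₀ Φ t X).toReal ∧
      0 < temper μ₀ Φ t X := by
  classical
  set c : ℝ := (μ₀ X).toReal with hc
  have hcpos : 0 < c := ENNReal.toReal_pos hX0.ne' (measure_ne_top μ₀ X)
  set N : ℝ := ∫ u, Real.exp (-t * Φ u) ∂μ₀ with hN
  set m : ℝ := -(t / c) * ∫ u in X, Φ u ∂μ₀ with hm
  -- measurability / integrability of exp(-tΦ)
  have hmeas : Measurable fun u => Real.exp (-t * Φ u) :=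
    (measurable_exp.comp (hΦmeas.const_mul (-t)))
  have hle1 : ∀ u, Real.exp (-t * Φ u) ≤ 1 := fun u => by
    rw [← Real.exp_zero]
    exact Real.exp_le_exp.2 (by nlinarith [hΦnonneg u])
  have hint : Integrable (fun u => Real.exp (-t * Φ u)) μ₀ := by
    refine Integrable.mono' (integrable_const 1) hmeas.aestronglyMeasurable ?_
    filter_upwards with u
    rw [Real.norm_eq_abs, abs_of_pos (Real.exp_pos _)]
    exact hle1 u
  have hintX : Integrable (fun u => Real.exp (-t * Φ u)) (μ₀.restrict X) :=
    hint.restrict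
  have hNpos : 0 < N := integral_exp_pos hint
  -- compute temper X
  have hTemper : temper μ₀ Φ t X
      = ENNReal.ofReal (∫ u in X, N⁻¹ * Real.exp (-t * Φ u) ∂μ₀) := by
    rw [temper, withDensity_apply _ hX,
      ← ofReal_integral_eq_lintegral_ofReal (hintX.const_mul _)]
    filter_upwards with u
    exact mul_nonneg (inv_nonneg.2 hNpos.le) (Real.exp_pos _).le
  have hIntXnonneg : 0 ≤ ∫ u in X, N⁻¹ * Real.exp (-t * Φ u) ∂μ₀ :=
    integral_nonneg fun u => mul_nonneg (inv_nonneg.2 hNpos.le) (Real.exp_pos _).le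
  have hToReal : (temper μ₀ Φ t X).toReal
      = N⁻¹ * ∫ u in X, Real.exp (-t * Φ u) ∂μ₀ := by
    rw [hTemper, ENNReal.toReal_ofReal hIntXnonneg, integral_const_mul]
  -- Jensen-type lower bound via exp x ≥ 1 + x
  have hΦintX : Integrable Φ (μ₀.restrict X) := hΦint.restrict
  have hmc : m * c = -t * ∫ u in X, Φ u ∂μ₀ := by
    rw [hm]; field_simp
  have key : c * Real.exp m ≤ ∫ u in X, Real.exp (-t * Φ u) ∂μ₀ := by
    have hptwise : ∀ u,
        Real.exp m + Real.exp m * (-t * Φ u - m) ≤ Real.exp (-t * Φ u) := by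
      intro u
      have h1 : (-t * Φ u - m) + 1 ≤ Real.exp (-t * Φ u - m) :=
        Real.add_one_le_exp _
      have h2 : Real.exp m * ((-t * Φ u - m) + 1)
          ≤ Real.exp m * Real.exp (-t * Φ u - m) :=
        mul_le_mul_of_nonneg_left h1 (Real.exp_pos _).le
      rw [← Real.exp_add] at h2
      calc Real.exp m + Real.exp m * (-t * Φ u - m)
          = Real.exp m * ((-t * Φ u - m) + 1) := by ring
        _ ≤ Real.exp (m + (-t * Φ u - m)) := h2
        _ = Real.exp (-t * Φ u) := by ring_nf
    have hintL : Integrable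
        (fun u => Real.exp m + Real.exp m * (-t * Φ u - m)) (μ₀.restrict X) := by
      apply Integrable.add (integrable_const _)
      exact (((hΦintX.const_mul (-t)).sub (integrable_const m)).const_mul _)
    have hmono := integral_mono hintL hintX fun u => hptwise u
    have hcompute : ∫ u in X, (Real.exp m + Real.exp m * (-t * Φ u - m)) ∂μ₀
        = c * Real.exp m := by
      have heq : (fun u => Real.exp m + Real.exp m * (-t * Φ u - m))
          = fun u => (Real.exp m * (1 - m)) + (Real.exp m * (-t)) * Φ u := by
        funext u; ring
      rw [heq, integral_add (integrable_const _) (hΦintX.const_mul _),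
        integral_const, integral_const_mul]
      simp only [Measure.restrict_apply_univ, measureReal_restrict_apply_univ, measureReal_def, smul_eq_mul, ← hc]
      have h2 : -t * ∫ u in X, Φ u ∂μ₀ = m * c := hmc.symm
      calc c * (Real.exp m * (1 - m)) + Real.exp m * -t * ∫ a in X, Φ a ∂μ₀
          = c * (Real.exp m * (1 - m)) + Real.exp m * (m * c) := by
            rw [mul_assoc, h2]
        _ = c * Real.exp m := by ring
    rwa [hcompute] at hmono
  have hmain : c / N * Real.exp m ≤ (temper μ₀ Φ t X).toReal := by
    have heq : c / N * Real.exp m = N⁻¹ * (c * Real.exp m) := by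
      rw [div_eq_mul_inv]; ring
    rw [hToReal, heq]
    exact mul_le_mul_of_nonneg_left key (inv_nonneg.2 hNpos.le)
  refine ⟨hmain, ?_⟩
  have hlbpos : 0 < c / N * Real.exp m :=
    mul_pos (div_pos hcpos hNpos) (Real.exp_pos _)
  have : 0 < (temper μ₀ Φ t X).toReal := lt_of_lt_of_le hlbpos hmain
  by_contra h
  push_neg at h
  simp only [le_zero_iff] at h
  rw [h] at this
  simp at this
end

section
/- For all 0 ≤ s < t, the symmetrized Kullback–Leibler (Jeffreys) divergence between consecutive tempering measures satisfies the identity D_{KL,2}(μ_s, μ_t) = (t−s)·(⟨Φ⟩_s − ⟨Φ⟩_t). -/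
open MeasureTheory Real

/-- The Kullback–Leibler divergence `D_KL(ν ‖ μ) = ∫ log (dν/dμ) dν` of two
(equivalent) probability measures. -/
noncomputable def klDivR {H : Type*} [MeasurableSpace H] (ν μ : Measure H) : ℝ :=
  ∫ u, Real.log ((ν.rnDeriv μ u).toReal) ∂ν

/-- The symmetrized Kullback–Leibler (Jeffreys) divergence
`D_{KL,2}(μ, ν) = D_KL(ν ‖ μ) + D_KL(μ ‖ ν)`. -/
noncomputable def klDiv2R {H : Type*} [MeasurableSpace H] (μ ν : Measure H) : ℝ :=
  klDivR ν μ + klDivR μ ν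

section Aux

variable {H : Type*} [MeasurableSpace H] {μ₀ : Measure H} {Φ : H → ℝ}

private lemma integrable_exp_temper [IsProbabilityMeasure μ₀] (hΦmeas : Measurable Φ)
    (hΦnonneg : ∀ u, 0 ≤ Φ u) {r : ℝ} (hr : 0 ≤ r) :
    Integrable (fun v => Real.exp (-r * Φ v)) μ₀ := by
  refine Integrable.mono' (integrable_const 1)
    ((hΦmeas.const_mul (-r)).exp.aestronglyMeasurable) ?_
  filter_upwards with v
  rw [Real.norm_eq_abs, abs_of_pos (Real.exp_pos _)]
  exact Real.exp_le_one_iff.2 (mul_nonpos_of_nonpos_of_nonneg (neg_nonpos.2 hr) (hΦnonneg v))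

private lemma N_pos_temper [IsProbabilityMeasure μ₀] (hΦmeas : Measurable Φ)
    (hΦnonneg : ∀ u, 0 ≤ Φ u) {r : ℝ} (hr : 0 ≤ r) :
    0 < ∫ v, Real.exp (-r * Φ v) ∂μ₀ := by
  rw [integral_pos_iff_support_of_nonneg (fun v => (Real.exp_pos _).le)
    (integrable_exp_temper hΦmeas hΦnonneg hr)]
  have h : Function.support (fun v => Real.exp (-r * Φ v)) = Set.univ := by
    ext v; simp [Real.exp_ne_zero]
  rw [h]
  simp

private lemma temper_prob [IsProbabilityMeasure μ₀] (hΦmeas : Measurable Φ)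
    (hΦnonneg : ∀ u, 0 ≤ Φ u) {r : ℝ} (hr : 0 ≤ r) :
    IsProbabilityMeasure (temper μ₀ Φ r) := by
  have hN := N_pos_temper (μ₀ := μ₀) hΦmeas hΦnonneg hr
  have key : temper μ₀ Φ r Set.univ = 1 := by
    rw [temper, withDensity_apply _ MeasurableSet.univ, setLIntegral_univ,
    ← ofReal_integral_eq_lintegral_ofReal
      ((integrable_exp_temper (μ₀ := μ₀) hΦmeas hΦnonneg hr).const_mul _)
        (ae_of_all _ fun v => by positivity)]
    rw [integral_const_mul, inv_mul_cancel₀ hN.ne', ENNReal.ofReal_one]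
  exact ⟨key⟩

private lemma klDivR_temper [IsProbabilityMeasure μ₀] (hΦmeas : Measurable Φ)
    (hΦnonneg : ∀ u, 0 ≤ Φ u) (hΦsq : MemLp Φ 2 μ₀) {a b : ℝ} (ha : 0 ≤ a) (hb : 0 ≤ b) :
    klDivR (temper μ₀ Φ a) (temper μ₀ Φ b) =
      Real.log (∫ v, Real.exp (-b * Φ v) ∂μ₀) - Real.log (∫ v, Real.exp (-a * Φ v) ∂μ₀)
      + (b - a) * ∫ u, Φ u ∂(temper μ₀ Φ a) := by
  set Na := ∫ v, Real.exp (-a * Φ v) ∂μ₀ with hNa_def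
  set Nb := ∫ v, Real.exp (-b * Φ v) ∂μ₀ with hNb_def
  have hNa : 0 < Na := N_pos_temper hΦmeas hΦnonneg ha
  have hNb : 0 < Nb := N_pos_temper hΦmeas hΦnonneg hb
  set fa : H → ENNReal := fun u => ENNReal.ofReal (Na⁻¹ * Real.exp (-a * Φ u)) with hfa_def
  set fb : H → ENNReal := fun u => ENNReal.ofReal (Nb⁻¹ * Real.exp (-b * Φ u)) with hfb_def
  have hfa_meas : Measurable fa := ((hΦmeas.const_mul (-a)).exp.const_mul _).ennreal_ofReal
  have hfb_meas : Measurable fb := ((hΦmeas.const_mul (-b)).exp.const_mul _).ennreal_ofReal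
  have hfb_pos : ∀ u, 0 < Nb⁻¹ * Real.exp (-b * Φ u) := fun u =>
    mul_pos (inv_pos.2 hNb) (Real.exp_pos _)
  have hfb_ne_zero : ∀ u, fb u ≠ 0 := fun u => (ENNReal.ofReal_pos.2 (hfb_pos u)).ne'
  haveI hPa : IsProbabilityMeasure (temper μ₀ Φ a) := temper_prob hΦmeas hΦnonneg ha
  haveI hPb : IsProbabilityMeasure (temper μ₀ Φ b) := temper_prob hΦmeas hΦnonneg hb
  have h1 : μ₀ = (μ₀.withDensity fb).withDensity fb⁻¹ :=
    (withDensity_inv_same hfb_meas (ae_of_all _ hfb_ne_zero)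
      (ae_of_all _ fun u => ENNReal.ofReal_ne_top)).symm
  have hta : temper μ₀ Φ a = μ₀.withDensity fa := rfl
  have htb : temper μ₀ Φ b = μ₀.withDensity fb := rfl
  have h2 : temper μ₀ Φ a = (temper μ₀ Φ b).withDensity (fb⁻¹ * fa) := by
    rw [hta, htb, withDensity_mul (μ₀.withDensity fb) (f := fb⁻¹) (g := fa)
      hfb_meas.inv hfa_meas, ← h1]
  have h3 : (temper μ₀ Φ a).rnDeriv (temper μ₀ Φ b) =ᵐ[temper μ₀ Φ b] fb⁻¹ * fa := by
    rw [h2]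
    exact Measure.rnDeriv_withDensity (temper μ₀ Φ b) (hfb_meas.inv.mul hfa_meas)
  have hac : temper μ₀ Φ a ≪ temper μ₀ Φ b := by
    rw [h2]; exact withDensity_absolutelyContinuous _ _
  have h4 : (temper μ₀ Φ a).rnDeriv (temper μ₀ Φ b) =ᵐ[temper μ₀ Φ a] fb⁻¹ * fa :=
    h3.filter_mono hac.ae_le
  have h5 : ∀ u, ((fb⁻¹ * fa) u).toReal = (Nb / Na) * Real.exp ((b - a) * Φ u) := by
    intro u
    have hx := hfb_pos u
    have hinv : (Real.exp (-b * Φ u))⁻¹ = Real.exp (b * Φ u) := by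
      rw [show -b * Φ u = -(b * Φ u) by ring, Real.exp_neg, inv_inv]
    have he : Real.exp ((b - a) * Φ u) = Real.exp (b * Φ u) * Real.exp (-a * Φ u) := by
      rw [← Real.exp_add]; congr 1; ring
    simp only [Pi.mul_apply, Pi.inv_apply, hfa_def, hfb_def]
    rw [← ENNReal.ofReal_inv_of_pos hx, ← ENNReal.ofReal_mul (inv_nonneg.2 hx.le),
      ENNReal.toReal_ofReal (by positivity)]
    rw [mul_inv, inv_inv, hinv, he]
    field_simp
  have h7 : (fun u => Real.log (((temper μ₀ Φ a).rnDeriv (temper μ₀ Φ b) u).toReal))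
      =ᵐ[temper μ₀ Φ a]
      (fun u => (Real.log Nb - Real.log Na) + (b - a) * Φ u) := by
    filter_upwards [h4] with u hu
    rw [hu, h5 u, Real.log_mul (by positivity) (Real.exp_ne_zero _),
      Real.log_div hNb.ne' hNa.ne', Real.log_exp]
  have hΦint : Integrable Φ (temper μ₀ Φ a) := by
    rw [temper, integrable_withDensity_iff hfa_meas (ae_of_all _ fun u => ENNReal.ofReal_lt_top)]
    refine Integrable.mono' (((hΦsq.integrable (by norm_num)).const_mul Na⁻¹))
      (hΦmeas.mul ((hΦmeas.const_mul (-a)).exp.const_mul _).ennreal_ofReal.ennreal_toReal).aestronglyMeasurable ?_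
    filter_upwards with u
    rw [ENNReal.toReal_ofReal (by positivity), Real.norm_eq_abs,
      abs_of_nonneg (mul_nonneg (hΦnonneg u) (by positivity))]
    calc Φ u * (Na⁻¹ * Real.exp (-a * Φ u)) ≤ Φ u * (Na⁻¹ * 1) := by
          gcongr
          · exact hΦnonneg u
          · exact Real.exp_le_one_iff.2
              (mul_nonpos_of_nonpos_of_nonneg (neg_nonpos.2 ha) (hΦnonneg u))
      _ = Na⁻¹ * Φ u := by ring
  rw [klDivR, integral_congr_ae h7,
    integral_add (integrable_const _) (hΦint.const_mul (b - a)),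
    integral_const, integral_const_mul]
  simp

end Aux

/-- Let `H` be a real separable Hilbert space with its Borel σ-algebra,
`μ₀` a Borel probability measure on `H`, and `Φ : H → ℝ` measurable, nonnegative and
square-integrable w.r.t. `μ₀`.  For all `0 ≤ s < t`, the symmetrized Kullback–Leibler
(Jeffreys) divergence between consecutive tempering measures satisfies
`D_{KL,2}(μ_s, μ_t) = (t − s)·(⟨Φ⟩_s − ⟨Φ⟩_t)`. -/
theorem tempering_jeffreys_divergence_identity
    {H : Type*} [NormedAddCommGroup H] [InnerProductSpace ℝ H] [CompleteSpace H]
    [TopologicalSpace.SeparableSpace H] [MeasurableSpace H] [BorelSpace H]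
    (μ₀ : Measure H) [IsProbabilityMeasure μ₀]
    (Φ : H → ℝ) (hΦmeas : Measurable Φ) (hΦnonneg : ∀ u, 0 ≤ Φ u)
    (hΦsq : MemLp Φ 2 μ₀)
    (s t : ℝ) (hs : 0 ≤ s) (hst : s < t) :
    klDiv2R (temper μ₀ Φ s) (temper μ₀ Φ t) =
      (t - s) * ((∫ u, Φ u ∂(temper μ₀ Φ s)) - ∫ u, Φ u ∂(temper μ₀ Φ t)) := by
  have ht : (0 : ℝ) ≤ t := hs.trans hst.le
  rw [klDiv2R, klDivR_temper hΦmeas hΦnonneg hΦsq ht hs,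
    klDivR_temper hΦmeas hΦnonneg hΦsq hs ht]
  ring
end
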